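/- For 0 < q < 1, the autonomous Caputo fractional initial value problem D_*^q x(t) = f(x(t)), x(0) = x_0, with f : ℝⁿ → ℝⁿ continuous, cannot have a non-constant T-periodic solution for any T > 0. -/

import Mathlib

open MeasureTheory Real Filter

/-- Caputo fractional derivative of order `q` with starting point `0`. -/
noncomputable def caputo (q : ℝ) (f : ℝ → ℝ) (t : ℝ) : ℝ :=
  (1 / Real.Gamma (1 - q)) * ∫ τ in (0:ℝ)..t, (t - τ) ^ (-q) * deriv f τ

/-- Two-parameter Mittag-Leffler function (real arguments). -/
noncomputable def ML (a b z : ℝ) : ℝ :=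
  ∑' k : ℕ, z ^ k / Real.Gamma (a * k + b)

lemma kernel_intervalIntegrable (q : ℝ) (hq1 : q < 1) {g : ℝ → ℝ} (hg : Continuous g)
    (a b c : ℝ) : IntervalIntegrable (fun τ => (c - τ) ^ (-q) * g τ) volume a b := by
  have h1 : IntervalIntegrable (fun x : ℝ => x ^ (-q)) volume (c - a) (c - b) :=
    intervalIntegral.intervalIntegrable_rpow' (by linarith)
  have h2 := h1.comp_sub_left c
  simp only [sub_sub_cancel] at h2
  exact h2.mul_continuousOn hg.continuousOn

/-- coefficients of the binomial series for `(1-w)^{-q}`. -/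
noncomputable def bc (q : ℝ) : ℕ → ℝ
  | 0 => 1
  | (j+1) => bc q j * (q + j) / (j + 1)

lemma bc_pos {q : ℝ} (hq : 0 < q) : ∀ j, 0 < bc q j
  | 0 => one_pos
  | (j+1) => by
      have := bc_pos hq j
      have hj : (0:ℝ) < j + 1 := by positivity
      have : 0 < bc q j * (q + j) := by positivity
      exact div_pos this hj

lemma bc_succ (q : ℝ) (j : ℕ) : ((j:ℝ)+1) * bc q (j+1) = q * bc (q+1) j := by
  induction j with
  | zero => simp [bc]
  | succ j ih =>
      have hj : ((j:ℝ)+1) ≠ 0 := by positivity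
      have hj2 : ((j:ℝ)+1+1) ≠ 0 := by positivity
      simp only [bc] at ih ⊢
      push_cast at ih ⊢
      field_simp at ih ⊢
      linear_combination (q + ((j:ℝ)+1)) * ih

/-- remainder of the binomial series after subtracting terms up to degree `k`. -/
noncomputable def Rk (q : ℝ) (k : ℕ) (w : ℝ) : ℝ :=
  (1 - w) ^ (-q) - ∑ j ∈ Finset.range k, bc q j * w ^ j

lemma hasDerivAt_base (q : ℝ) {w : ℝ} (hw : w < 1) :
    HasDerivAt (fun w : ℝ => (1 - w) ^ (-q)) (q * (1 - w) ^ (-(q+1))) w := by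
  have h1 : HasDerivAt (fun y : ℝ => y ^ (-q)) (-q * (1 - w) ^ (-q - 1)) (1 - w) :=
    Real.hasDerivAt_rpow_const (Or.inl (by linarith [hw]))
  have h2 : HasDerivAt (fun w : ℝ => (1 : ℝ) - w) (-1) w := by
    simpa using (hasDerivAt_id w).const_sub 1
  have := h1.comp w h2
  rw [show q * (1 - w) ^ (-(q+1)) = -q * (1 - w) ^ (-q - 1) * -1 by ring_nf]
  exact this

lemma hasDerivAt_Rk (q : ℝ) (k : ℕ) {w : ℝ} (hw : w < 1) :
    HasDerivAt (Rk q (k+1)) (q * Rk (q+1) k w) w := by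
  have hsum : HasDerivAt (fun w : ℝ => ∑ j ∈ Finset.range (k+1), bc q j * w ^ j)
      (∑ j ∈ Finset.range (k+1), bc q j * ((j:ℝ) * w ^ (j-1))) w := by
    apply HasDerivAt.fun_sum
    intro j _
    exact (hasDerivAt_pow j w).const_mul (bc q j)
  have hre : (∑ j ∈ Finset.range (k+1), bc q j * ((j:ℝ) * w ^ (j-1)))
      = q * ∑ i ∈ Finset.range k, bc (q+1) i * w ^ i := by
    rw [Finset.sum_range_succ']
    simp only [Nat.cast_zero, zero_mul, mul_zero, add_zero]
    rw [Finset.mul_sum]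
    apply Finset.sum_congr rfl
    intro i _
    push_cast
    rw [show bc q (i+1) * (((i:ℝ)+1) * w ^ i) = (((i:ℝ)+1) * bc q (i+1)) * w ^ i by ring, bc_succ]
    ring
  have H := (hasDerivAt_base q hw).sub hsum
  rw [hre] at H
  have heq : q * (1 - w) ^ (-(q+1)) - q * ∑ i ∈ Finset.range k, bc (q+1) i * w ^ i
      = q * Rk (q+1) k w := by unfold Rk; ring
  rw [heq] at H
  exact H

lemma Rk_zero (q : ℝ) (k : ℕ) : Rk q (k+1) 0 = 0 := by
  unfold Rk
  rw [Finset.sum_eq_single_of_mem 0 (Finset.mem_range.2 (Nat.succ_pos k))]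
  · simp [bc]
  · intro j _ hj
    simp [zero_pow hj]

lemma Rk_continuousOn (q : ℝ) (k : ℕ) : ContinuousOn (Rk q k) (Set.Iio 1) := by
  apply ContinuousOn.sub
  · apply ContinuousOn.rpow_const (continuous_const.sub continuous_id).continuousOn
    intro w hw
    left
    have hwlt : w < 1 := hw
    intro h
    rw [Pi.sub_apply, sub_eq_zero] at h
    simp only [id_eq] at h
    linarith
  · exact (continuous_finset_sum _ fun j _ => continuous_const.mul (continuous_pow j)).continuousOn

lemma two_rpow_bound {q s : ℝ} (hq : 0 < q) (hs : s ∈ Set.Icc (0:ℝ) (1/2)) :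
    (1 - s) ^ (-(q+1)) ≤ 2 ^ (q+1) := by
  obtain ⟨hs0, hs1⟩ := hs
  have h1 : (0:ℝ) < 1/2 := by norm_num
  have h2 : (1/2 : ℝ) ≤ 1 - s := by linarith
  have := Real.rpow_le_rpow_of_nonpos h1 h2 (by linarith : -(q+1) ≤ 0)
  calc (1 - s) ^ (-(q+1)) ≤ (1/2 : ℝ) ^ (-(q+1)) := this
    _ = 2 ^ (q+1) := by
        rw [Real.rpow_neg (by norm_num), one_div, Real.inv_rpow (by norm_num), inv_inv]

lemma Rk_eq_integral (q : ℝ) (k : ℕ) (hq : 0 < q) {w : ℝ} (hw : w ∈ Set.Icc (0:ℝ) (1/2)) :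
    Rk q (k+1) w = ∫ s in (0:ℝ)..w, q * Rk (q+1) k s := by
  obtain ⟨hw0, hw1⟩ := hw
  have hsub : Set.uIcc (0:ℝ) w ⊆ Set.Iio 1 := by
    rw [Set.uIcc_of_le hw0]
    intro y hy
    exact lt_of_le_of_lt hy.2 (by linarith)
  have hint : IntervalIntegrable (fun s => q * Rk (q+1) k s) volume 0 w := by
    apply ContinuousOn.intervalIntegrable
    exact (continuousOn_const.mul ((Rk_continuousOn (q+1) k).mono hsub))
  have h := intervalIntegral.integral_eq_sub_of_hasDerivAt
    (f := Rk q (k+1)) (f' := fun s => q * Rk (q+1) k s) ?_ hint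
  · rw [h, Rk_zero, sub_zero]
  · intro y hy
    exact hasDerivAt_Rk q k (hsub hy)

lemma Rk_bound : ∀ (k : ℕ) (q : ℝ), 0 < q → ∃ C : ℝ, 0 ≤ C ∧
    ∀ w ∈ Set.Icc (0:ℝ) (1/2), |Rk q (k+1) w| ≤ C * w ^ (k+1) := by
  intro k
  induction k with
  | zero =>
      intro q hq
      refine ⟨q * 2 ^ (q+1), by positivity, ?_⟩
      intro w hw
      obtain ⟨hw0, hw1⟩ := hw
      rw [Rk_eq_integral q 0 hq ⟨hw0, hw1⟩]
      have hb : ∀ x ∈ Set.uIoc (0:ℝ) w, ‖q * Rk (q+1) 0 x‖ ≤ q * 2 ^ (q+1) := by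
        intro x hx
        rw [Set.uIoc_of_le hw0] at hx
        have hx' : x ∈ Set.Icc (0:ℝ) (1/2) := ⟨le_of_lt hx.1, le_trans hx.2 hw1⟩
        have : Rk (q+1) 0 x = (1 - x) ^ (-(q+1)) := by simp [Rk]
        rw [Real.norm_eq_abs, this, abs_mul, abs_of_pos hq,
          abs_of_pos (Real.rpow_pos_of_pos (by linarith [hx'.2] : (0:ℝ) < 1 - x) _)]
        exact mul_le_mul_of_nonneg_left (two_rpow_bound hq hx') (le_of_lt hq)
      have := intervalIntegral.norm_integral_le_of_norm_le_const hb
      rw [Real.norm_eq_abs] at this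
      calc |∫ s in (0:ℝ)..w, q * Rk (q+1) 0 s| ≤ q * 2 ^ (q+1) * |w - 0| := this
        _ = q * 2 ^ (q+1) * w ^ (0+1) := by rw [sub_zero, abs_of_nonneg hw0, pow_one]
  | succ k ih =>
      intro q hq
      obtain ⟨C, hC0, hC⟩ := ih (q+1) (by linarith)
      refine ⟨q * C, by positivity, ?_⟩
      intro w hw
      obtain ⟨hw0, hw1⟩ := hw
      rw [Rk_eq_integral q (k+1) hq ⟨hw0, hw1⟩]
      have hb : ∀ᵐ x ∂(volume.restrict (Set.uIoc (0:ℝ) w)),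
          ‖q * Rk (q+1) (k+1) x‖ ≤ q * C * x ^ (k+1) := by
        rw [ae_restrict_iff' measurableSet_uIoc]
        apply ae_of_all
        intro x hx
        rw [Set.uIoc_of_le hw0] at hx
        have hx' : x ∈ Set.Icc (0:ℝ) (1/2) := ⟨le_of_lt hx.1, le_trans hx.2 hw1⟩
        rw [Real.norm_eq_abs, abs_mul, abs_of_pos hq, mul_assoc]
        exact mul_le_mul_of_nonneg_left (hC x hx') (le_of_lt hq)
      have hgint : IntervalIntegrable (fun x => q * C * x ^ (k+1)) volume 0 w :=
        (continuous_const.mul (continuous_pow (k+1))).intervalIntegrable 0 w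
      have := intervalIntegral.norm_integral_le_of_norm_le hw0
        (by rw [Set.uIoc_of_le hw0] at hb; exact (ae_restrict_iff' measurableSet_Ioc).1 hb) hgint
      rw [Real.norm_eq_abs] at this
      have hI : (∫ x in (0:ℝ)..w, q * C * x ^ (k+1)) = q * C * (w ^ (k+2) / (k+2)) := by
        rw [intervalIntegral.integral_const_mul, integral_pow,
          zero_pow (by omega : k+1+1 ≠ 0), sub_zero]
        push_cast
        ring_nf
      calc |∫ s in (0:ℝ)..w, q * Rk (q+1) (k+1) s| ≤ |q * C * (w ^ (k+2) / (k+2))| := by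
            rw [← hI]; exact this.trans (le_abs_self _)
        _ ≤ q * C * w ^ (k+1+1) := by
            rw [abs_of_nonneg (by positivity)]
            have hck : (0:ℝ) ≤ (k:ℝ) := Nat.cast_nonneg k
            have hk : (1:ℝ) ≤ (k:ℝ)+2 := by linarith
            have : w ^ (k+2) / ((k:ℝ)+2) ≤ w ^ (k+2) := by
              apply div_le_self (by positivity) hk
            calc q * C * (w ^ (k+2) / ((k:ℝ)+2)) ≤ q * C * w ^ (k+2) :=
                  mul_le_mul_of_nonneg_left this (by positivity)
              _ = q * C * w ^ (k+1+1) := rfl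

lemma deriv_shift {g : ℝ → ℝ} {T : ℝ} (hper : ∀ t, 0 ≤ t → g (t + T) = g t) {s : ℝ}
    (hs : 0 < s) : deriv g (s + T) = deriv g s := by
  have h1 : (fun u => g (u + T)) =ᶠ[nhds s] g := by
    filter_upwards [Ioi_mem_nhds hs] with u hu
    exact hper u (le_of_lt hu)
  rw [← deriv_comp_add_const g T s]
  exact h1.deriv_eq

lemma stepA (q T : ℝ) (hq0 : 0 < q) (hq1 : q < 1) (hT : 0 < T)
    (g : ℝ → ℝ) (hg : ContDiff ℝ 1 g)
    (hper : ∀ t, 0 ≤ t → g (t + T) = g t)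
    (hcap : ∀ t, 0 ≤ t → caputo q g (t + T) = caputo q g t) :
    ∀ u, T ≤ u → (∫ s in (0:ℝ)..T, (u - s) ^ (-q) * deriv g s) = 0 := by
  intro u hu
  obtain ⟨t, ht0, rfl⟩ : ∃ t, 0 ≤ t ∧ u = t + T := ⟨u - T, by linarith, by ring⟩
  have hg' : Continuous (deriv g) := hg.continuous_deriv le_rfl
  have hΓpos : 0 < Real.Gamma (1 - q) := Real.Gamma_pos_of_pos (by linarith)
  have hΓ : (1 / Real.Gamma (1 - q)) ≠ 0 := by positivity
  have hc := hcap t ht0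
  unfold caputo at hc
  have hI : (∫ τ in (0:ℝ)..(t+T), ((t+T) - τ) ^ (-q) * deriv g τ)
      = ∫ τ in (0:ℝ)..t, (t - τ) ^ (-q) * deriv g τ := mul_left_cancel₀ hΓ hc
  have hint1 : IntervalIntegrable (fun τ => ((t+T) - τ) ^ (-q) * deriv g τ) volume 0 T :=
    kernel_intervalIntegrable q hq1 hg' 0 T (t+T)
  have hint2 : IntervalIntegrable (fun τ => ((t+T) - τ) ^ (-q) * deriv g τ) volume T (t+T) :=
    kernel_intervalIntegrable q hq1 hg' T (t+T) (t+T)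
  have hsplit := intervalIntegral.integral_add_adjacent_intervals hint1 hint2
  have htail : (∫ τ in T..(t+T), ((t+T) - τ) ^ (-q) * deriv g τ)
      = ∫ s in (0:ℝ)..t, (t - s) ^ (-q) * deriv g s := by
    have hcomp := intervalIntegral.integral_comp_add_right (a := (0:ℝ)) (b := t)
      (fun τ => ((t+T) - τ) ^ (-q) * deriv g τ) T
    rw [zero_add] at hcomp
    rw [← hcomp]
    apply intervalIntegral.integral_congr_ae
    apply ae_of_all
    intro s hs
    rw [Set.uIoc_of_le ht0] at hs
    have hs0 : 0 < s := hs.1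
    rw [show (t+T) - (s+T) = t - s by ring, deriv_shift hper hs0]
  rw [htail] at hsplit
  rw [hI] at hsplit
  linarith [hsplit]

lemma stepB (q T : ℝ) (hq0 : 0 < q) (hq1 : q < 1) (hT : 0 < T)
    (g' : ℝ → ℝ) (hg' : Continuous g')
    (hF : ∀ u, T ≤ u → (∫ s in (0:ℝ)..T, (u - s) ^ (-q) * g' s) = 0) :
    ∀ k : ℕ, (∫ s in (0:ℝ)..T, s ^ k * g' s) = 0 := by
  intro k
  induction k using Nat.strong_induction_on with
  | _ k ih =>
  obtain ⟨C, hC0, hC⟩ := Rk_bound k q hq0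
  obtain ⟨B, hB⟩ := (isCompact_Icc (a := (0:ℝ)) (b := T)).exists_bound_of_continuousOn
    hg'.continuousOn
  have hB0 : 0 ≤ B := le_trans (norm_nonneg _) (hB 0 ⟨le_refl 0, le_of_lt hT⟩)
  set M : ℕ → ℝ := fun j => ∫ s in (0:ℝ)..T, s ^ j * g' s with hMdef
  set D : ℝ := C * B * T ^ (k+2) / bc q k with hDdef
  have hbc := bc_pos hq0 k
  have hD0 : 0 ≤ D := by positivity
  have key : ∀ u, 2*T ≤ u → |M k| ≤ D / u := by
    intro u hu
    have hu0 : (0:ℝ) < u := by linarith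
    have huq : (0:ℝ) < u ^ (-q) := Real.rpow_pos_of_pos hu0 _
    -- pointwise decomposition on [0,T]
    have hdecomp : ∀ s ∈ Set.Icc (0:ℝ) T,
        (u - s) ^ (-q) * g' s
          = (∑ j ∈ Finset.range (k+1), bc q j * u ^ (-q - (j:ℝ)) * (s ^ j * g' s))
            + u ^ (-q) * Rk q (k+1) (s/u) * g' s := by
      intro s hs
      obtain ⟨hs0, hsT⟩ := hs
      have hsu : 0 ≤ 1 - s/u := by
        rw [sub_nonneg, div_le_one hu0]; linarith
      have h1 : (u - s) ^ (-q) = u ^ (-q) * (1 - s/u) ^ (-q) := by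
        rw [← Real.mul_rpow (le_of_lt hu0) hsu]
        congr 1
        field_simp
      have h2 : (1 - s/u) ^ (-q)
          = (∑ j ∈ Finset.range (k+1), bc q j * (s/u) ^ j) + Rk q (k+1) (s/u) := by
        unfold Rk; ring
      have expand : u ^ (-q) * ((∑ j ∈ Finset.range (k+1), bc q j * (s/u) ^ j)
            + Rk q (k+1) (s/u)) * g' s
          = (∑ j ∈ Finset.range (k+1), u ^ (-q) * (bc q j * (s/u) ^ j) * g' s)
            + u ^ (-q) * Rk q (k+1) (s/u) * g' s := by
        rw [mul_add, add_mul, Finset.mul_sum, Finset.sum_mul]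
      rw [h1, h2, expand]
      congr 1
      apply Finset.sum_congr rfl
      intro j _
      have h3 : u ^ (-q - (j:ℝ)) = u ^ (-q) * ((u:ℝ) ^ (j:ℕ))⁻¹ := by
        rw [show -q - (j:ℝ) = -q + (-(j:ℝ)) by ring, Real.rpow_add hu0,
          Real.rpow_neg (le_of_lt hu0) (j:ℝ), Real.rpow_natCast]
      rw [h3, div_pow, div_eq_mul_inv]
      ring
    -- integral decomposition
    have hFu := hF u (by linarith)
    have hint_sum : ∀ j ∈ Finset.range (k+1), IntervalIntegrable
        (fun s => bc q j * u ^ (-q - (j:ℝ)) * (s ^ j * g' s)) volume 0 T := by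
      intro j _
      exact (continuous_const.mul ((continuous_pow j).mul hg')).intervalIntegrable 0 T
    have hcont_rem : ContinuousOn (fun s => u ^ (-q) * Rk q (k+1) (s/u) * g' s)
        (Set.uIcc (0:ℝ) T) := by
      apply ContinuousOn.mul _ hg'.continuousOn
      apply ContinuousOn.mul continuousOn_const
      apply (Rk_continuousOn q (k+1)).comp ((continuousOn_id.div_const u))
      intro s hs
      rw [Set.uIcc_of_le (le_of_lt hT)] at hs
      show s / u < 1
      rw [div_lt_one hu0]
      linarith [hs.2]
    have heqint : (∫ s in (0:ℝ)..T, (u - s) ^ (-q) * g' s)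
        = (∫ s in (0:ℝ)..T, (∑ j ∈ Finset.range (k+1),
            bc q j * u ^ (-q - (j:ℝ)) * (s ^ j * g' s)))
          + ∫ s in (0:ℝ)..T, u ^ (-q) * Rk q (k+1) (s/u) * g' s := by
      have hsint : IntervalIntegrable (fun s => ∑ j ∈ Finset.range (k+1),
          bc q j * u ^ (-q - (j:ℝ)) * (s ^ j * g' s)) volume 0 T := by
        have h := IntervalIntegrable.sum (μ := volume) (a := 0) (b := T) _ hint_sum
        rwa [Finset.sum_fn] at h
      rw [← intervalIntegral.integral_add hsint (hcont_rem.intervalIntegrable)]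
      apply intervalIntegral.integral_congr
      intro s hs
      rw [Set.uIcc_of_le (le_of_lt hT)] at hs
      exact hdecomp s hs
    -- sum over j equals single term by induction hypothesis
    have hsumval : (∫ s in (0:ℝ)..T, (∑ j ∈ Finset.range (k+1),
        bc q j * u ^ (-q - (j:ℝ)) * (s ^ j * g' s)))
        = bc q k * u ^ (-q - (k:ℝ)) * M k := by
      rw [intervalIntegral.integral_finset_sum hint_sum]
      rw [Finset.sum_range_succ]
      have hz : ∀ j ∈ Finset.range k,
          (∫ s in (0:ℝ)..T, bc q j * u ^ (-q - (j:ℝ)) * (s ^ j * g' s)) = 0 := by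
        intro j hj
        rw [intervalIntegral.integral_const_mul, ih j (Finset.mem_range.1 hj), mul_zero]
      rw [Finset.sum_eq_zero hz, zero_add, intervalIntegral.integral_const_mul]
    -- remainder bound
    have hrem : |∫ s in (0:ℝ)..T, u ^ (-q) * Rk q (k+1) (s/u) * g' s|
        ≤ u ^ (-q) * (C * (T/u) ^ (k+1)) * B * T := by
      have hbd : ∀ s ∈ Set.uIoc (0:ℝ) T, ‖u ^ (-q) * Rk q (k+1) (s/u) * g' s‖
          ≤ u ^ (-q) * (C * (T/u) ^ (k+1)) * B := by
        intro s hs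
        rw [Set.uIoc_of_le (le_of_lt hT)] at hs
        have hs0 : 0 ≤ s := le_of_lt hs.1
        have hsT : s ≤ T := hs.2
        have hsu0 : 0 ≤ s/u := div_nonneg hs0 (le_of_lt hu0)
        have hsuT : s/u ≤ T/u := by
          gcongr
        have hsuH : s/u ≤ 1/2 := by
          calc s/u ≤ T/u := hsuT
            _ ≤ 1/2 := by rw [div_le_div_iff₀ hu0 (by norm_num : (0:ℝ) < 2)]; linarith
        have hRk : |Rk q (k+1) (s/u)| ≤ C * (s/u) ^ (k+1) := hC (s/u) ⟨hsu0, hsuH⟩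
        have hpow : (s/u) ^ (k+1) ≤ (T/u) ^ (k+1) := pow_le_pow_left₀ hsu0 hsuT (k+1)
        rw [Real.norm_eq_abs, abs_mul, abs_mul, abs_of_pos huq]
        have hmain : u ^ (-q) * |Rk q (k+1) (s/u)| ≤ u ^ (-q) * (C * (T/u) ^ (k+1)) := by
          apply mul_le_mul_of_nonneg_left _ (le_of_lt huq)
          exact le_trans hRk (mul_le_mul_of_nonneg_left hpow hC0)
        exact mul_le_mul hmain (by rw [← Real.norm_eq_abs]; exact hB s ⟨hs0, hsT⟩)
          (abs_nonneg _) (by positivity)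
      have := intervalIntegral.norm_integral_le_of_norm_le_const hbd
      rw [Real.norm_eq_abs, sub_zero, abs_of_pos hT] at this
      exact this
    -- combine
    have hcomb : bc q k * u ^ (-q - (k:ℝ)) * M k
        = - ∫ s in (0:ℝ)..T, u ^ (-q) * Rk q (k+1) (s/u) * g' s := by
      rw [← hsumval]
      rw [heqint] at hFu
      linarith [hFu]
    have habs : bc q k * u ^ (-q - (k:ℝ)) * |M k|
        ≤ u ^ (-q) * (C * (T/u) ^ (k+1)) * B * T := by
      have h1 : |bc q k * u ^ (-q - (k:ℝ)) * M k|
          = bc q k * u ^ (-q - (k:ℝ)) * |M k| := by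
        rw [abs_mul, abs_mul, abs_of_pos hbc,
          abs_of_pos (Real.rpow_pos_of_pos hu0 _)]
      rw [← h1, hcomb, abs_neg]
      exact hrem
    -- turn into |M k| <= D / u
    have hukq : u ^ (-q - (k:ℝ)) = u ^ (-q) * ((u:ℝ) ^ (k:ℕ))⁻¹ := by
      rw [show -q - (k:ℝ) = -q + (-(k:ℝ)) by ring, Real.rpow_add hu0,
        Real.rpow_neg (le_of_lt hu0) (k:ℝ), Real.rpow_natCast]
    have hTu : (T/u) ^ (k+1) = T ^ (k+1) / u ^ (k+1) := div_pow T u (k+1)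
    rw [hukq] at habs
    have hupow : (0:ℝ) < u ^ (k:ℕ) := by positivity
    have hupow1 : (0:ℝ) < u ^ (k+1) := by positivity
    rw [hTu] at habs
    have hMk : |M k| ≤ D / u := by
      rw [hDdef]
      rw [div_div, le_div_iff₀ (by positivity : (0:ℝ) < bc q k * u)]
      have hw : (0:ℝ) ≤ u ^ (k:ℕ) * u * (u ^ (-q))⁻¹ := by positivity
      have hmul := mul_le_mul_of_nonneg_right habs hw
      have e1 : bc q k * (u ^ (-q) * ((u:ℝ) ^ (k:ℕ))⁻¹) * |M k| * (u ^ (k:ℕ) * u * (u ^ (-q))⁻¹)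
          = |M k| * (bc q k * u) := by
        field_simp
      have e2 : u ^ (-q) * (C * (T ^ (k+1) / u ^ (k+1))) * B * T * (u ^ (k:ℕ) * u * (u ^ (-q))⁻¹)
          = C * B * T ^ (k+2) := by
        rw [pow_succ u k, pow_succ T (k+1)]
        field_simp
      rw [e1, e2] at hmul
      linarith
    exact hMk
  -- conclude M k = 0
  by_contra hne
  have hMpos : 0 < |M k| := abs_pos.2 hne
  set u : ℝ := max (2*T) ((D+1)/|M k|) with hu
  have hu2T : 2*T ≤ u := le_max_left _ _
  have hukey := key u hu2T
  have hu0 : (0:ℝ) < u := lt_of_lt_of_le (by linarith) hu2T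
  have h1 : |M k| * u ≤ D := by
    rw [le_div_iff₀ hu0] at hukey
    exact hukey
  have h2 : (D+1)/|M k| ≤ u := le_max_right _ _
  have h3 : D + 1 ≤ |M k| * u := by
    have hmm := mul_le_mul_of_nonneg_left h2 (le_of_lt hMpos)
    calc D + 1 = |M k| * ((D+1)/|M k|) := by field_simp
      _ ≤ |M k| * u := hmm
  linarith

lemma stepC (T : ℝ) (hT : 0 < T) (h : ℝ → ℝ) (hh : Continuous h)
    (hmom : ∀ k : ℕ, (∫ s in (0:ℝ)..T, s ^ k * h s) = 0) :
    ∀ τ ∈ Set.Icc (0:ℝ) T, h τ = 0 := by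
  -- integrals against polynomials vanish
  have hpoly : ∀ p : Polynomial ℝ, (∫ s in (0:ℝ)..T, p.eval s * h s) = 0 := by
    intro p
    have hrw : (∫ s in (0:ℝ)..T, p.eval s * h s)
        = ∫ s in (0:ℝ)..T, ∑ j ∈ Finset.range (p.natDegree + 1),
            p.coeff j * (s ^ j * h s) := by
      apply intervalIntegral.integral_congr
      intro s _
      show Polynomial.eval s p * h s = _
      rw [Polynomial.eval_eq_sum_range, Finset.sum_mul]
      apply Finset.sum_congr rfl
      intro j _
      ring
    rw [hrw, intervalIntegral.integral_finset_sum]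
    · apply Finset.sum_eq_zero
      intro j _
      rw [intervalIntegral.integral_const_mul, hmom j, mul_zero]
    · intro j _
      exact (continuous_const.mul ((continuous_pow j).mul hh)).intervalIntegrable 0 T
  -- the integral of h^2 vanishes
  obtain ⟨B, hB⟩ := (isCompact_Icc (a := (0:ℝ)) (b := T)).exists_bound_of_continuousOn
    hh.continuousOn
  have hB0 : 0 ≤ B := le_trans (norm_nonneg _) (hB 0 ⟨le_refl 0, le_of_lt hT⟩)
  have hsq : (∫ s in (0:ℝ)..T, h s * h s) = 0 := by
    have hnn : 0 ≤ ∫ s in (0:ℝ)..T, h s * h s := by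
      apply intervalIntegral.integral_nonneg (le_of_lt hT)
      intro s _
      exact mul_self_nonneg _
    have hub : ∀ ε : ℝ, 0 < ε → (∫ s in (0:ℝ)..T, h s * h s) ≤ ε * (B * T) := by
      intro ε hε
      obtain ⟨p, hp⟩ := exists_polynomial_near_of_continuousOn 0 T h hh.continuousOn ε hε
      have hdiff : (∫ s in (0:ℝ)..T, h s * h s)
          = ∫ s in (0:ℝ)..T, (h s - p.eval s) * h s := by
        have : (∫ s in (0:ℝ)..T, (h s - p.eval s) * h s)
            = (∫ s in (0:ℝ)..T, h s * h s) - ∫ s in (0:ℝ)..T, p.eval s * h s := by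
          rw [← intervalIntegral.integral_sub (f := fun s => h s * h s) (g := fun s => p.eval s * h s) ((hh.mul hh).intervalIntegrable 0 T :
              IntervalIntegrable (fun s => h s * h s) volume 0 T)
            (((Polynomial.continuous p).mul hh).intervalIntegrable 0 T :
              IntervalIntegrable (fun s => p.eval s * h s) volume 0 T)]
          apply intervalIntegral.integral_congr
          intro s _
          ring
        rw [this, hpoly, sub_zero]
      rw [hdiff]
      have hbd : ∀ s ∈ Set.uIoc (0:ℝ) T, ‖(h s - p.eval s) * h s‖ ≤ ε * B := by
        intro s hs
        rw [Set.uIoc_of_le (le_of_lt hT)] at hs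
        have hsI : s ∈ Set.Icc (0:ℝ) T := ⟨le_of_lt hs.1, hs.2⟩
        rw [Real.norm_eq_abs, abs_mul]
        apply mul_le_mul
        · rw [abs_sub_comm]
          exact le_of_lt (hp s hsI)
        · rw [← Real.norm_eq_abs]; exact hB s hsI
        · exact abs_nonneg _
        · exact le_of_lt hε
      have hres := intervalIntegral.norm_integral_le_of_norm_le_const hbd
      rw [Real.norm_eq_abs, sub_zero, abs_of_pos hT] at hres
      calc (∫ s in (0:ℝ)..T, (h s - p.eval s) * h s)
          ≤ |∫ s in (0:ℝ)..T, (h s - p.eval s) * h s| := le_abs_self _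
        _ ≤ ε * B * T := hres
        _ = ε * (B * T) := by ring
    by_contra hne
    have hpos : 0 < ∫ s in (0:ℝ)..T, h s * h s := lt_of_le_of_ne hnn (Ne.symm hne)
    have hBT0 : (0:ℝ) < B * T + 1 := by positivity
    have := hub ((∫ s in (0:ℝ)..T, h s * h s) / (2 * (B * T + 1)))
      (by positivity)
    set I := ∫ s in (0:ℝ)..T, h s * h s
    have h2 : I / (2 * (B * T + 1)) * (B * T) < I := by
      rw [div_mul_eq_mul_div, div_lt_iff₀ (by positivity)]
      nlinarith
    linarith
  -- conclude pointwise
  intro τ hτ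
  by_contra hne
  have hU : IsOpen {s : ℝ | h s ≠ 0} := isOpen_ne.preimage hh
  have hτmem : τ ∈ {s : ℝ | h s ≠ 0} := hne
  -- find a point of the open set inside Ioo 0 T
  have hclos : τ ∈ closure (Set.Ioo (0:ℝ) T) := by
    rw [closure_Ioo (ne_of_lt hT)]
    exact hτ
  obtain ⟨y, hy1, hy2⟩ : ({s : ℝ | h s ≠ 0} ∩ Set.Ioo 0 T).Nonempty := by
    rw [_root_.mem_closure_iff] at hclos
    obtain ⟨y, hy⟩ := hclos _ hU hτmem
    exact ⟨y, hy.1, hy.2⟩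
  have hsub : {s : ℝ | h s ≠ 0} ∩ Set.Ioo 0 T
      ⊆ Function.support (fun s => h s * h s) ∩ Set.Ioc 0 T := by
    rintro z ⟨hz1, hz2⟩
    exact ⟨mul_self_ne_zero.2 hz1, hz2.1, le_of_lt hz2.2⟩
  have hmeas : 0 < volume (Function.support (fun s => h s * h s) ∩ Set.Ioc 0 T) := by
    apply lt_of_lt_of_le _ (measure_mono hsub)
    exact (hU.inter isOpen_Ioo).measure_pos volume ⟨y, hy1, hy2⟩
  have hpos := (intervalIntegral.integral_pos_iff_support_of_nonneg_ae
    (ae_of_all _ (fun s => mul_self_nonneg (h s)))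
    ((hh.mul hh).intervalIntegrable 0 T)).2 ⟨hT, hmeas⟩
  rw [hsq] at hpos
  exact lt_irrefl 0 hpos

lemma main_aux (q T : ℝ) (hq0 : 0 < q) (hq1 : q < 1) (hT : 0 < T)
    (g : ℝ → ℝ) (hg : ContDiff ℝ 1 g)
    (hper : ∀ t, 0 ≤ t → g (t + T) = g t)
    (hcap : ∀ t, 0 ≤ t → caputo q g (t + T) = caputo q g t) :
    ∀ t, 0 ≤ t → g t = g 0 := by
  have hg' : Continuous (deriv g) := hg.continuous_deriv le_rfl
  have hF := stepA q T hq0 hq1 hT g hg hper hcap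
  have hmom := stepB q T hq0 hq1 hT (deriv g) hg' hF
  have hzero := stepC T hT (deriv g) hg' hmom
  have hconst : ∀ t ∈ Set.Icc (0:ℝ) T, g t = g 0 := by
    intro t ht
    have hftc : (∫ s in (0:ℝ)..t, deriv g s) = g t - g 0 :=
      intervalIntegral.integral_deriv_eq_sub
        (fun x _ => (hg.differentiable one_ne_zero).differentiableAt)
        (hg'.intervalIntegrable 0 t)
    have hzero' : (∫ s in (0:ℝ)..t, deriv g s) = 0 := by
      rw [intervalIntegral.integral_congr (g := fun _ => (0:ℝ)) ?_,
        intervalIntegral.integral_zero]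
      intro s hs
      rw [Set.uIcc_of_le ht.1] at hs
      exact hzero s ⟨hs.1, le_trans hs.2 ht.2⟩
    rw [hzero'] at hftc
    linarith [hftc]
  have hshift : ∀ k : ℕ, ∀ r, 0 ≤ r → g (r + k * T) = g r := by
    intro k
    induction k with
    | zero => intro r _; norm_num
    | succ k ih =>
        intro r hr
        have hkT : (0:ℝ) ≤ r + k * T := by positivity
        have h1 : r + ((k:ℕ)+1 : ℝ) * T = (r + k * T) + T := by ring
        push_cast
        rw [h1, hper (r + k * T) hkT, ih r hr]
  intro t ht
  set k : ℕ := ⌊t/T⌋.toNat with hk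
  have hfl : (0:ℤ) ≤ ⌊t/T⌋ := Int.floor_nonneg.2 (div_nonneg ht (le_of_lt hT))
  have hkc : ((k:ℕ):ℝ) = ((⌊t/T⌋:ℤ):ℝ) := by exact_mod_cast Int.toNat_of_nonneg hfl
  have hle : ((k:ℕ):ℝ) ≤ t/T := by rw [hkc]; exact Int.floor_le _
  have hlt : t/T < ((k:ℕ):ℝ)+1 := by rw [hkc]; exact Int.lt_floor_add_one _
  have h1 : ((k:ℕ):ℝ)*T ≤ t := by
    have := mul_le_mul_of_nonneg_right hle (le_of_lt hT)
    rwa [div_mul_cancel₀ t (ne_of_gt hT)] at this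
  have h2 : t < (((k:ℕ):ℝ)+1)*T := by
    have := mul_lt_mul_of_pos_right hlt hT
    rwa [div_mul_cancel₀ t (ne_of_gt hT)] at this
  have hgt : g t = g ((t - k*T) + k*T) := by norm_num
  rw [hgt, hshift k (t - k*T) (by linarith)]
  exact hconst (t - k*T) ⟨by linarith, by nlinarith⟩

theorem caputo_ivp_no_periodic_solution
    (n : ℕ) (q : ℝ) (hq0 : 0 < q) (hq1 : q < 1)
    (f : (Fin n → ℝ) → (Fin n → ℝ)) (hf : Continuous f)
    (x0 : Fin n → ℝ) (x : ℝ → Fin n → ℝ) (hx : ContDiff ℝ 1 x)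
    (hivp : ∀ t : ℝ, 0 ≤ t → ∀ i, caputo q (fun s => x s i) t = f (x t) i)
    (hinit : x 0 = x0) (T : ℝ) (hT : 0 < T) :
    ¬ ((∀ t : ℝ, 0 ≤ t → x (t + T) = x t) ∧ ∃ s t : ℝ, 0 ≤ s ∧ 0 ≤ t ∧ x s ≠ x t) := by
  rintro ⟨hper, s, t, hs, ht, hne⟩
  have hex : ∃ i, x s i ≠ x t i := by
    by_contra hc
    push_neg at hc
    exact hne (funext hc)
  obtain ⟨i, hi⟩ := hex
  have hgc : ContDiff ℝ 1 (fun u => x u i) := (contDiff_pi.1 hx) i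
  have hperg : ∀ r, 0 ≤ r → (fun u => x u i) (r + T) = (fun u => x u i) r := by
    intro r hr
    simp only
    rw [hper r hr]
  have hcapg : ∀ r, 0 ≤ r →
      caputo q (fun u => x u i) (r + T) = caputo q (fun u => x u i) r := by
    intro r hr
    have e1 := hivp (r + T) (by linarith) i
    have e2 := hivp r hr i
    rw [e1, e2, hper r hr]
  have hval := main_aux q T hq0 hq1 hT (fun u => x u i) hgc hperg hcapg
  exact hi ((hval s hs).trans (hval t ht).symm)
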